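/- Let F and G be groups. The lexicographic construction is continuous in the following sense: for all bi-invariant strict total orders <_F on F and <_G on G, and every finite subset S of F × G all of whose elements are positive in the lexicographic ordering built from (<_F, <_G), there exist a finite subset A of F whose elements are positive under <_F and a finite subset B of G whose elements are positive under <_G, such that for any bi-invariant strict total orders <'_F on F and <'_G on G under which all elements of A (respectively B) are positive, every element of S is positive in the lexicographic ordering built from (<'_F, <'_G). (This says the map 𝔏 : O(F) × O(G) → O(F × G) is continuous for the natural topologies on spaces of orderings.) -/

import Mathlib

/-- A bi-invariant strict total order on a group. -/
def IsBiOrder {G : Type*} [Group G] (lt : G → G → Prop) : Prop :=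
  IsStrictTotalOrder G lt ∧ (∀ x y z : G, lt x y → lt (x * z) (y * z)) ∧
    (∀ x y z : G, lt x y → lt (z * x) (z * y))

/-- Continuity of the lexicographic construction `𝔏 : O(F) × O(G) → O(F × G)`:
any finite set of lex-positive elements of `F × G` remains positive for all lexicographic
orderings built from orderings of `F` and `G` keeping suitable finite sets positive. -/
theorem lex_construction_continuous {F G : Type*} [Group F] [Group G]
    (ltF : F → F → Prop) (ltG : G → G → Prop)
    (hF : IsBiOrder ltF) (hG : IsBiOrder ltG)
    (S : Finset (F × G))
    (hS : ∀ p ∈ S, ltF 1 p.1 ∨ ((1 : F) = p.1 ∧ ltG 1 p.2)) :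
    ∃ (A : Finset F) (B : Finset G),
      (∀ a ∈ A, ltF 1 a) ∧ (∀ b ∈ B, ltG 1 b) ∧
      ∀ (ltF' : F → F → Prop) (ltG' : G → G → Prop),
        IsBiOrder ltF' → IsBiOrder ltG' →
        (∀ a ∈ A, ltF' 1 a) → (∀ b ∈ B, ltG' 1 b) →
        ∀ p ∈ S, ltF' 1 p.1 ∨ ((1 : F) = p.1 ∧ ltG' 1 p.2) := by
  classical
  refine ⟨(S.filter (fun p => ltF 1 p.1)).image Prod.fst,
    (S.filter (fun p => (1 : F) = p.1)).image Prod.snd, ?_, ?_, ?_⟩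
  · intro a ha
    obtain ⟨p, hp, rfl⟩ := Finset.mem_image.1 ha
    exact (Finset.mem_filter.1 hp).2
  · intro b hb
    obtain ⟨p, hp, rfl⟩ := Finset.mem_image.1 hb
    obtain ⟨hpS, h1⟩ := Finset.mem_filter.1 hp
    rcases hS p hpS with h | ⟨_, h⟩
    · exact absurd h (by rw [← h1]; exact fun hc => hF.1.toIsStrictOrder.toIrrefl.irrefl 1 hc)
    · exact h
  · intro ltF' ltG' _ _ hA hB p hp
    rcases hS p hp with h | ⟨h1, _⟩
    · exact Or.inl (hA p.1 (Finset.mem_image.2 ⟨p, Finset.mem_filter.2 ⟨hp, h⟩, rfl⟩))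
    · exact Or.inr ⟨h1, hB p.2 (Finset.mem_image.2 ⟨p, Finset.mem_filter.2 ⟨hp, h1⟩, rfl⟩)⟩
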